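/- Greedy hitting set is optimal: the set H produced by the deadline-greedy algorithm on intervals I_1,...,I_n (sorted by deadline) has minimum cardinality among all hitting sets of I_1,...,I_n. -/
import Mathlib

open scoped Classical

/-- The deadline-greedy hitting-set procedure: intervals `[r j, d j]` are scanned
in order `j = 0, 1, ..., n-1` (assumed sorted by deadline), and `d j` is added to
the current set whenever interval `j` is not yet hit. -/
noncomputable def greedyHS (r d : ℕ → ℝ) : ℕ → Finset ℝ
  | 0 => ∅
  | j + 1 =>
    have := Classical.propDecidable (∃ x ∈ greedyHS r d j, r j ≤ x ∧ x ≤ d j)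
    if ∃ x ∈ greedyHS r d j, r j ≤ x ∧ x ≤ d j then greedyHS r d j
    else insert (d j) (greedyHS r d j)

lemma greedyHS_mono (r d : ℕ → ℝ) {i j : ℕ} (h : i ≤ j) :
    greedyHS r d i ⊆ greedyHS r d j := by
  induction j with
  | zero => simp_all
  | succ k ih =>
    rcases Nat.eq_or_lt_of_le h with rfl | h'
    · exact subset_rfl
    · have hk := ih (Nat.lt_succ_iff.mp h')
      rw [greedyHS]
      split_ifs with hc
      · exact hk
      · exact hk.trans (Finset.subset_insert _ _)

lemma greedyHS_subset_image (r d : ℕ → ℝ) (n : ℕ) :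
    greedyHS r d n ⊆ ((Finset.range n).filter
      (fun j => ¬ ∃ x ∈ greedyHS r d j, r j ≤ x ∧ x ≤ d j)).image d := by
  induction n with
  | zero => simp [greedyHS]
  | succ k ih =>
    have hsub : ((Finset.range k).filter
        (fun j => ¬ ∃ x ∈ greedyHS r d j, r j ≤ x ∧ x ≤ d j)).image d ⊆
        ((Finset.range (k+1)).filter
        (fun j => ¬ ∃ x ∈ greedyHS r d j, r j ≤ x ∧ x ≤ d j)).image d :=
      Finset.image_subset_image
        (Finset.filter_subset_filter _ (Finset.range_subset_range.mpr (Nat.le_succ k)))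
    rw [greedyHS]
    split_ifs with hc
    · exact ih.trans hsub
    · intro x hx
      rcases Finset.mem_insert.mp hx with rfl | hx'
      · exact Finset.mem_image.mpr ⟨k,
          Finset.mem_filter.mpr ⟨Finset.mem_range.mpr (Nat.lt_succ_self k), hc⟩, rfl⟩
      · exact hsub (ih hx')

theorem greedy_hitting_set_optimal (n : ℕ) (r d : ℕ → ℝ)
    (hrd : ∀ j < n, r j ≤ d j)
    (hsorted : ∀ i j, i ≤ j → j < n → d i ≤ d j)
    (H' : Finset ℝ) (hH' : ∀ j < n, ∃ x ∈ H', r j ≤ x ∧ x ≤ d j) :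
    (greedyHS r d n).card ≤ H'.card := by
  classical
  set F := (Finset.range n).filter
    (fun j => ¬ ∃ x ∈ greedyHS r d j, r j ≤ x ∧ x ≤ d j) with hF
  have h1 : (greedyHS r d n).card ≤ F.card :=
    le_trans (Finset.card_le_card (greedyHS_subset_image r d n)) Finset.card_image_le
  refine h1.trans ?_
  have hw : ∀ j : ℕ, ∃ x, j ∈ F → x ∈ H' ∧ r j ≤ x ∧ x ≤ d j := by
    intro j
    by_cases hj : j ∈ F
    · obtain ⟨x, hx⟩ := hH' j (Finset.mem_range.mp (Finset.mem_filter.mp hj).1)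
      exact ⟨x, fun _ => hx⟩
    · exact ⟨0, fun h => absurd h hj⟩
  choose f hf using hw
  have key : ∀ i j, i ∈ F → j ∈ F → i < j → f i ≠ f j := by
    intro i j hi hj hlt heq
    obtain ⟨hiR, hiA⟩ := Finset.mem_filter.mp hi
    obtain ⟨hjR, hjA⟩ := Finset.mem_filter.mp hj
    have hdi1 : d i ∈ greedyHS r d (i + 1) := by
      rw [greedyHS, if_neg hiA]
      exact Finset.mem_insert_self _ _
    have hdij : d i ∈ greedyHS r d j := greedyHS_mono r d hlt hdi1
    have hrj : r j ≤ d i := by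
      calc r j ≤ f j := (hf j hj).2.1
        _ = f i := heq.symm
        _ ≤ d i := (hf i hi).2.2
    have hdd : d i ≤ d j := hsorted i j hlt.le (Finset.mem_range.mp hjR)
    exact hjA ⟨d i, hdij, hrj, hdd⟩
  apply Finset.card_le_card_of_injOn f (fun j hj => (hf j hj).1)
  intro i hi j hj heq
  by_contra hne
  rcases lt_or_gt_of_ne hne with h | h
  · exact key i j hi hj h heq
  · exact key j i hj hi h heq.symm
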